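/- With Y = (1/p_r) A_{(·,Θ_r)} B_{(Θ_r,·)} and P(r=ℓ)=p_ℓ as above, ‖E[(Y−AB)ᵀ(Y−AB)]‖₂ ≤ ‖AB‖₂² + 2‖AB‖₂ Σ_{ℓ=1}^k ‖A_{(·,Θ_ℓ)}B_{(Θ_ℓ,·)}‖_F + Σ_{ℓ=1}^k (1/p_ℓ)‖A_{(·,Θ_ℓ)}B_{(Θ_ℓ,·)}‖_F². -/

import Mathlib

open Finset

/-- Frobenius norm of a real matrix. -/
noncomputable def frob {m ρ : ℕ} (M : Matrix (Fin m) (Fin ρ) ℝ) : ℝ :=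
  Real.sqrt (∑ i, ∑ j, (M i j) ^ 2)

/-- Euclidean (2-)norm of a real vector. -/
noncomputable def enorm2 {n : ℕ} (v : Fin n → ℝ) : ℝ :=
  Real.sqrt (∑ i, (v i) ^ 2)

/-- Spectral (operator 2-)norm of a real matrix. -/
noncomputable def spec {m ρ : ℕ} (M : Matrix (Fin m) (Fin ρ) ℝ) : ℝ :=
  ⨆ x : {x : Fin ρ → ℝ // enorm2 x ≤ 1}, enorm2 (M.mulVec x.1)

/-- Block product `A_{(·,Θ_ℓ)} B_{(Θ_ℓ,·)} = ∑_{j : Θ j = ℓ} A_{(·,j)} B_{(j,·)}`. -/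
noncomputable def blockProd {m n ρ k : ℕ} (A : Matrix (Fin m) (Fin n) ℝ)
    (B : Matrix (Fin n) (Fin ρ) ℝ) (Θ : Fin n → Fin k) (ℓ : Fin k) :
    Matrix (Fin m) (Fin ρ) ℝ :=
  Matrix.of fun i h => ∑ j ∈ Finset.univ.filter (fun j => Θ j = ℓ), A i j * B j h

/-- The randomized estimator `Ŝ` built from a sample `r : Fin c → Fin k`. -/
noncomputable def Shat {m n ρ k : ℕ} (c : ℕ) (A : Matrix (Fin m) (Fin n) ℝ)
    (B : Matrix (Fin n) (Fin ρ) ℝ) (Θ : Fin n → Fin k) (p : Fin k → ℝ)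
    (r : Fin c → Fin k) : Matrix (Fin m) (Fin ρ) ℝ :=
  ((c : ℝ)⁻¹) • ∑ i, (p (r i))⁻¹ • blockProd A B Θ (r i)

open Matrix

lemma enorm2_nonneg {n : ℕ} (v : Fin n → ℝ) : 0 ≤ enorm2 v := Real.sqrt_nonneg _

lemma enorm2_sq {n : ℕ} (v : Fin n → ℝ) : enorm2 v ^ 2 = ∑ i, (v i) ^ 2 := by
  rw [enorm2, Real.sq_sqrt]; positivity

lemma dot_le {n : ℕ} (u v : Fin n → ℝ) : ∑ i, u i * v i ≤ enorm2 u * enorm2 v :=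
  Real.sum_mul_le_sqrt_mul_sqrt _ _ _

lemma enorm2_add_le {n : ℕ} (u v : Fin n → ℝ) : enorm2 (u + v) ≤ enorm2 u + enorm2 v := by
  have expand : ∑ i, ((u + v) i) ^ 2 = (∑ i, u i ^ 2) + 2 * (∑ i, u i * v i) + ∑ i, v i ^ 2 := by
    simp only [Pi.add_apply, add_sq, Finset.sum_add_distrib, Finset.mul_sum]; ring_nf
  have h : ∑ i, ((u + v) i) ^ 2 ≤ (enorm2 u + enorm2 v) ^ 2 := by
    rw [expand, add_sq, enorm2_sq, enorm2_sq]
    nlinarith [dot_le u v]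
  calc enorm2 (u + v) = Real.sqrt (∑ i, ((u + v) i) ^ 2) := rfl
    _ ≤ Real.sqrt ((enorm2 u + enorm2 v) ^ 2) := Real.sqrt_le_sqrt h
    _ = enorm2 u + enorm2 v := Real.sqrt_sq (by have := enorm2_nonneg u; have := enorm2_nonneg v; linarith)

lemma enorm2_smul {n : ℕ} (c : ℝ) (v : Fin n → ℝ) : enorm2 (c • v) = |c| * enorm2 v := by
  rw [enorm2, enorm2]
  have : ∑ i, (c • v) i ^ 2 = c ^ 2 * ∑ i, v i ^ 2 := by
    rw [Finset.mul_sum]; apply Finset.sum_congr rfl; intro i _; simp [mul_pow]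
  rw [this, Real.sqrt_mul (sq_nonneg c), Real.sqrt_sq_eq_abs]

lemma enorm2_neg {n : ℕ} (v : Fin n → ℝ) : enorm2 (-v) = enorm2 v := by
  rw [enorm2, enorm2]; congr 1; apply Finset.sum_congr rfl; intro i _; simp

lemma enorm2_zero {n : ℕ} : enorm2 (0 : Fin n → ℝ) = 0 := by simp [enorm2]

lemma frob_nonneg {m ρ : ℕ} (M : Matrix (Fin m) (Fin ρ) ℝ) : 0 ≤ frob M := Real.sqrt_nonneg _

lemma mulVec_le_frob {m ρ : ℕ} (M : Matrix (Fin m) (Fin ρ) ℝ) (x : Fin ρ → ℝ) :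
    enorm2 (M.mulVec x) ≤ frob M * enorm2 x := by
  have h : ∑ i, (M.mulVec x i) ^ 2 ≤ (∑ i, ∑ j, (M i j) ^ 2) * ∑ j, (x j) ^ 2 := by
    rw [Finset.sum_mul]
    apply Finset.sum_le_sum
    intro i _
    exact sum_mul_sq_le_sq_mul_sq (R := ℝ) Finset.univ (fun j => M i j) x
  calc enorm2 (M.mulVec x) ≤ Real.sqrt ((∑ i, ∑ j, (M i j) ^ 2) * ∑ j, (x j) ^ 2) :=
        Real.sqrt_le_sqrt h
    _ = frob M * enorm2 x := Real.sqrt_mul (by positivity) _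

lemma spec_bdd {m ρ : ℕ} (M : Matrix (Fin m) (Fin ρ) ℝ) :
    BddAbove (Set.range fun x : {x : Fin ρ → ℝ // enorm2 x ≤ 1} => enorm2 (M.mulVec x.1)) := by
  refine ⟨frob M, ?_⟩
  rintro _ ⟨x, rfl⟩
  calc enorm2 (M.mulVec x.1) ≤ frob M * enorm2 x.1 := mulVec_le_frob M x.1
    _ ≤ frob M * 1 := by
        exact mul_le_mul_of_nonneg_left x.2 (frob_nonneg M)
    _ = frob M := mul_one _

instance specNonempty {ρ : ℕ} : Nonempty {x : Fin ρ → ℝ // enorm2 x ≤ 1} :=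
  ⟨⟨0, by rw [enorm2_zero]; norm_num⟩⟩

lemma spec_nonneg {m ρ : ℕ} (M : Matrix (Fin m) (Fin ρ) ℝ) : 0 ≤ spec M :=
  Real.iSup_nonneg fun x => enorm2_nonneg _

lemma spec_le {m ρ : ℕ} {M : Matrix (Fin m) (Fin ρ) ℝ} {C : ℝ}
    (h : ∀ x : Fin ρ → ℝ, enorm2 x ≤ 1 → enorm2 (M.mulVec x) ≤ C) : spec M ≤ C :=
  ciSup_le fun x => h x.1 x.2

lemma le_spec {m ρ : ℕ} (M : Matrix (Fin m) (Fin ρ) ℝ) (x : Fin ρ → ℝ) (hx : enorm2 x ≤ 1) :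
    enorm2 (M.mulVec x) ≤ spec M :=
  le_ciSup (spec_bdd M) ⟨x, hx⟩

lemma spec_le_frob {m ρ : ℕ} (M : Matrix (Fin m) (Fin ρ) ℝ) : spec M ≤ frob M := by
  apply spec_le
  intro x hx
  calc enorm2 (M.mulVec x) ≤ frob M * enorm2 x := mulVec_le_frob M x
    _ ≤ frob M * 1 := mul_le_mul_of_nonneg_left hx (frob_nonneg M)
    _ = frob M := mul_one _

lemma enorm2_mulVec_le {m ρ : ℕ} (M : Matrix (Fin m) (Fin ρ) ℝ) (x : Fin ρ → ℝ) :
    enorm2 (M.mulVec x) ≤ spec M * enorm2 x := by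
  rcases eq_or_lt_of_le (enorm2_nonneg x) with h0 | h0
  · have hx0 : x = 0 := by
      funext i
      by_contra hi
      have : 0 < ∑ j, (x j) ^ 2 :=
        Finset.sum_pos' (fun j _ => sq_nonneg _) ⟨i, Finset.mem_univ i, pow_pos (abs_pos.mpr hi) 2 |>.trans_le (by rw [sq_abs])⟩
      have : 0 < enorm2 x := Real.sqrt_pos.mpr this
      linarith [h0.symm]
    simp [hx0, Matrix.mulVec_zero, enorm2_zero, ← h0]
  · set c := enorm2 x with hc
    have hu : enorm2 ((c⁻¹) • x) ≤ 1 := by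
      rw [enorm2_smul, abs_of_pos (inv_pos.mpr h0)]
      rw [inv_mul_cancel₀ (ne_of_gt h0)]
    have := le_spec M _ hu
    rw [Matrix.mulVec_smul] at this
    rw [enorm2_smul, abs_of_pos (inv_pos.mpr h0)] at this
    calc enorm2 (M.mulVec x) = c * (c⁻¹ * enorm2 (M.mulVec x)) := by
          field_simp
      _ ≤ c * spec M := mul_le_mul_of_nonneg_left this (le_of_lt h0)
      _ = spec M * c := mul_comm _ _

lemma spec_transpose_le {m ρ : ℕ} (M : Matrix (Fin m) (Fin ρ) ℝ) :
    spec Mᵀ ≤ spec M := by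
  apply spec_le
  intro y hy
  set w := Mᵀ.mulVec y with hw
  have hwj : ∀ j, w j = ∑ i, M i j * y i := by
    intro j
    simp only [hw, Matrix.mulVec, dotProduct, Matrix.transpose_apply]
  rcases eq_or_lt_of_le (enorm2_nonneg w) with h0 | h0
  · rw [← h0]; exact spec_nonneg M
  · have h1 : ∑ j, (w j) ^ 2 = ∑ i, y i * (M.mulVec w) i := by
      calc ∑ j, w j ^ 2 = ∑ j, ∑ i, M i j * y i * w j := by
            apply Finset.sum_congr rfl
            intro j _
            rw [sq]
            nth_rewrite 1 [hwj j]
            rw [Finset.sum_mul]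
        _ = ∑ i, ∑ j, M i j * y i * w j := Finset.sum_comm
        _ = ∑ i, y i * (M.mulVec w) i := by
            apply Finset.sum_congr rfl
            intro i _
            simp only [Matrix.mulVec, dotProduct, Finset.mul_sum]
            apply Finset.sum_congr rfl
            intro j _
            ring
    have h2 : enorm2 w ^ 2 ≤ spec M * enorm2 w := by
      rw [enorm2_sq, h1]
      calc ∑ i, y i * (M.mulVec w) i ≤ enorm2 y * enorm2 (M.mulVec w) := dot_le _ _
        _ ≤ 1 * (spec M * enorm2 w) := by
            apply mul_le_mul hy (enorm2_mulVec_le M w) (enorm2_nonneg _) zero_le_one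
        _ = spec M * enorm2 w := one_mul _
    rw [sq, mul_comm (spec M) (enorm2 w)] at h2
    exact le_of_mul_le_mul_left h2 h0

lemma spec_mul_le {m n ρ : ℕ} (M : Matrix (Fin m) (Fin n) ℝ) (N : Matrix (Fin n) (Fin ρ) ℝ) :
    spec (M * N) ≤ spec M * spec N := by
  apply spec_le
  intro x hx
  rw [← Matrix.mulVec_mulVec]
  calc enorm2 (M.mulVec (N.mulVec x)) ≤ spec M * enorm2 (N.mulVec x) := enorm2_mulVec_le _ _
    _ ≤ spec M * (spec N * enorm2 x) :=
        mul_le_mul_of_nonneg_left (enorm2_mulVec_le _ _) (spec_nonneg M)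
    _ ≤ spec M * (spec N * 1) := by
        apply mul_le_mul_of_nonneg_left _ (spec_nonneg M)
        exact mul_le_mul_of_nonneg_left hx (spec_nonneg N)
    _ = spec M * spec N := by ring

lemma spec_transpose_mul_self {m ρ : ℕ} (M : Matrix (Fin m) (Fin ρ) ℝ) :
    spec (Mᵀ * M) ≤ spec M ^ 2 := by
  calc spec (Mᵀ * M) ≤ spec Mᵀ * spec M := spec_mul_le _ _
    _ ≤ spec M * spec M := mul_le_mul_of_nonneg_right (spec_transpose_le M) (spec_nonneg M)
    _ = spec M ^ 2 := (sq _).symm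

lemma spec_add_le {m ρ : ℕ} (M N : Matrix (Fin m) (Fin ρ) ℝ) :
    spec (M + N) ≤ spec M + spec N := by
  apply spec_le
  intro x hx
  rw [Matrix.add_mulVec]
  calc enorm2 (M.mulVec x + N.mulVec x) ≤ enorm2 (M.mulVec x) + enorm2 (N.mulVec x) :=
        enorm2_add_le _ _
    _ ≤ spec M + spec N := add_le_add (le_spec M x hx) (le_spec N x hx)

lemma spec_neg {m ρ : ℕ} (M : Matrix (Fin m) (Fin ρ) ℝ) : spec (-M) = spec M := by
  unfold spec
  congr 1
  funext x
  rw [Matrix.neg_mulVec, enorm2_neg]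

lemma spec_sub_le {m ρ : ℕ} (M N : Matrix (Fin m) (Fin ρ) ℝ) :
    spec (M - N) ≤ spec M + spec N := by
  rw [sub_eq_add_neg]
  calc spec (M + -N) ≤ spec M + spec (-N) := spec_add_le _ _
    _ = spec M + spec N := by rw [spec_neg]

lemma spec_smul {m ρ : ℕ} (c : ℝ) (M : Matrix (Fin m) (Fin ρ) ℝ) :
    spec (c • M) = |c| * spec M := by
  unfold spec
  have h : (fun x : {x : Fin ρ → ℝ // enorm2 x ≤ 1} => enorm2 ((c • M).mulVec x.1))
      = fun x => |c| * enorm2 (M.mulVec x.1) := by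
    funext x
    rw [Matrix.smul_mulVec, enorm2_smul]
  rw [h]
  exact (Real.mul_iSup_of_nonneg (abs_nonneg c) _).symm

lemma spec_sum_le {m ρ : ℕ} {ι : Type*} (s : Finset ι) (f : ι → Matrix (Fin m) (Fin ρ) ℝ) :
    spec (∑ i ∈ s, f i) ≤ ∑ i ∈ s, spec (f i) := by
  classical
  induction s using Finset.induction_on with
  | empty => simp [spec_le (M := (0 : Matrix (Fin m) (Fin ρ) ℝ)) (C := 0)
      (fun x _ => by rw [Matrix.zero_mulVec, enorm2_zero])]
  | @insert _ _ hnot ih =>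
    rw [Finset.sum_insert hnot, Finset.sum_insert hnot]
    exact (spec_add_le _ _).trans (add_le_add_right ih _)

theorem stmt14 (m n ρ k : ℕ) (hk : 1 ≤ k)
    (A : Matrix (Fin m) (Fin n) ℝ) (B : Matrix (Fin n) (Fin ρ) ℝ)
    (Θ : Fin n → Fin k) (hΘ : Function.Surjective Θ)
    (p : Fin k → ℝ) (hp : ∀ ℓ, 0 < p ℓ) (hp1 : ∑ ℓ, p ℓ = 1) :
    spec (∑ ℓ, p ℓ •
        (Matrix.transpose ((p ℓ)⁻¹ • blockProd A B Θ ℓ - A * B) *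
          ((p ℓ)⁻¹ • blockProd A B Θ ℓ - A * B))) ≤
      spec (A * B) ^ 2 + 2 * spec (A * B) * (∑ ℓ, frob (blockProd A B Θ ℓ)) +
        ∑ ℓ, (p ℓ)⁻¹ * frob (blockProd A B Θ ℓ) ^ 2 := by
  have hSnn : 0 ≤ spec (A * B) := spec_nonneg _
  have hterm : ∀ ℓ : Fin k, spec ((p ℓ)⁻¹ • blockProd A B Θ ℓ - A * B)
      ≤ (p ℓ)⁻¹ * frob (blockProd A B Θ ℓ) + spec (A * B) := by
    intro ℓ
    calc spec ((p ℓ)⁻¹ • blockProd A B Θ ℓ - A * B)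
        ≤ spec ((p ℓ)⁻¹ • blockProd A B Θ ℓ) + spec (A * B) := spec_sub_le _ _
      _ = (p ℓ)⁻¹ * spec (blockProd A B Θ ℓ) + spec (A * B) := by
          rw [spec_smul, abs_of_pos (inv_pos.mpr (hp ℓ))]
      _ ≤ (p ℓ)⁻¹ * frob (blockProd A B Θ ℓ) + spec (A * B) := by
          have h1 := spec_le_frob (blockProd A B Θ ℓ)
          have h0 : (0:ℝ) ≤ (p ℓ)⁻¹ := le_of_lt (inv_pos.mpr (hp ℓ))
          nlinarith
  calc spec (∑ ℓ, p ℓ •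
        (Matrix.transpose ((p ℓ)⁻¹ • blockProd A B Θ ℓ - A * B) *
          ((p ℓ)⁻¹ • blockProd A B Θ ℓ - A * B)))
      ≤ ∑ ℓ, spec (p ℓ •
        (Matrix.transpose ((p ℓ)⁻¹ • blockProd A B Θ ℓ - A * B) *
          ((p ℓ)⁻¹ • blockProd A B Θ ℓ - A * B))) := spec_sum_le _ _
    _ ≤ ∑ ℓ, p ℓ * ((p ℓ)⁻¹ * frob (blockProd A B Θ ℓ) + spec (A * B)) ^ 2 := by
        apply Finset.sum_le_sum
        intro ℓ _
        rw [spec_smul, abs_of_pos (hp ℓ)]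
        apply mul_le_mul_of_nonneg_left _ (le_of_lt (hp ℓ))
        calc spec (Matrix.transpose ((p ℓ)⁻¹ • blockProd A B Θ ℓ - A * B) *
              ((p ℓ)⁻¹ • blockProd A B Θ ℓ - A * B))
            ≤ spec ((p ℓ)⁻¹ • blockProd A B Θ ℓ - A * B) ^ 2 := spec_transpose_mul_self _
          _ ≤ ((p ℓ)⁻¹ * frob (blockProd A B Θ ℓ) + spec (A * B)) ^ 2 :=
              pow_le_pow_left₀ (spec_nonneg _) (hterm ℓ) 2
    _ = spec (A * B) ^ 2 + 2 * spec (A * B) * (∑ ℓ, frob (blockProd A B Θ ℓ)) +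
        ∑ ℓ, (p ℓ)⁻¹ * frob (blockProd A B Θ ℓ) ^ 2 := by
        have expand : ∀ ℓ : Fin k,
            p ℓ * ((p ℓ)⁻¹ * frob (blockProd A B Θ ℓ) + spec (A * B)) ^ 2
            = (p ℓ)⁻¹ * frob (blockProd A B Θ ℓ) ^ 2
              + 2 * spec (A * B) * frob (blockProd A B Θ ℓ) + p ℓ * spec (A * B) ^ 2 := by
          intro ℓ
          have hpne := ne_of_gt (hp ℓ)
          field_simp
          ring
        rw [Finset.sum_congr rfl (fun ℓ _ => expand ℓ), Finset.sum_add_distrib,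
          Finset.sum_add_distrib, ← Finset.mul_sum, ← Finset.sum_mul, hp1]
        ring
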